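/- arXiv:1210.5659 — 3 statements merged into one kernel-verified Lean document; each statement's English description precedes it below -/
import Mathlib

section
/- There is no unary operator 𝒟 on WMTS such that: (1) 𝒟(S) is deterministic for every WMTS S; (2) S ≤_m 𝒟(S) for every WMTS S; and (3) for every WMTS S, every deterministic WMTS D and every ε ≥ 0, d_m(S,D) ≤ ε implies d_m(𝒟(S),D) ≤ ε. -/
open scoped ENNReal

namespace WMTSQuant

/-- A closed extended-integer interval `[lo, hi]` with `lo ∈ ℤ ∪ {-∞}`,
`hi ∈ ℤ ∪ {∞}` and `lo ≤ hi`. -/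
structure EInterval where
  lo : EReal
  hi : EReal
  lo_mem : lo = ⊥ ∨ ∃ n : ℤ, lo = ((n : ℝ) : EReal)
  hi_mem : hi = ⊤ ∨ ∃ n : ℤ, hi = ((n : ℝ) : EReal)
  lo_le_hi : lo ≤ hi

/-- Specification labels 𝕂 = Σ × 𝕀. -/
abbrev SLabel (Act : Type) := Act × EInterval

/-- The refinement order ⊑ on specification labels. -/
def LabelLE {Act : Type} (k k' : SLabel Act) : Prop :=
  k.1 = k'.1 ∧ k'.2.lo ≤ k.2.lo ∧ k.2.hi ≤ k'.2.hi

/-- Implementation labels: singleton integer intervals. -/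
def IsImpLabel {Act : Type} (k : SLabel Act) : Prop :=
  ∃ n : ℤ, k.2.lo = ((n : ℝ) : EReal) ∧ k.2.hi = ((n : ℝ) : EReal)

/-- Truncation of an extended real to `[0,∞]`. -/
noncomputable def erealToNNE (x : EReal) : ℝ≥0∞ :=
  if x = ⊤ then ⊤ else ENNReal.ofReal x.toReal

open Classical in
/-- The label distance d_𝕂. -/
noncomputable def dK {Act : Type} (k ℓ : SLabel Act) : ℝ≥0∞ :=
  if k.1 = ℓ.1 then erealToNNE (max (ℓ.2.lo - k.2.lo) (max (k.2.hi - ℓ.2.hi) 0)) else ⊤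

/-- Weighted modal transition systems. -/
structure WMTS (Act : Type) where
  State : Type
  init : State
  may : State → SLabel Act → State → Prop
  must : State → SLabel Act → State → Prop
  must_may : ∀ s k s', must s k s' → ∃ ℓ, LabelLE k ℓ ∧ may s ℓ s'

variable {Act : Type}

/-- Implementations: `must = may`, all labels singleton integer intervals. -/
def WMTS.IsImplementation (S : WMTS Act) : Prop :=
  (∀ s k s', S.may s k s' ↔ S.must s k s') ∧
    ∀ s k s', S.must s k s' → IsImpLabel k

/-- (Boolean) modal refinement `S₁ ≤ₘ S₂`. -/
def Refines (S₁ S₂ : WMTS Act) : Prop :=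
  ∃ R : S₁.State → S₂.State → Prop, R S₁.init S₂.init ∧
    ∀ s₁ s₂, R s₁ s₂ →
      (∀ k₁ t₁, S₁.may s₁ k₁ t₁ →
        ∃ k₂ t₂, S₂.may s₂ k₂ t₂ ∧ LabelLE k₁ k₂ ∧ R t₁ t₂) ∧
      (∀ k₂ t₂, S₂.must s₂ k₂ t₂ →
        ∃ k₁ t₁, S₁.must s₁ k₁ t₁ ∧ LabelLE k₁ k₂ ∧ R t₁ t₂)

/-- Implementation semantics ⟦S⟧. -/
def Impl (S : WMTS Act) : Set (WMTS Act) :=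
  {I | I.IsImplementation ∧ Refines I S}

/-- The endofunction whose least fixed point is the modal refinement distance. -/
noncomputable def dmF (lam : ℝ≥0∞) (S₁ S₂ : WMTS Act) :
    (S₁.State → S₂.State → ℝ≥0∞) →o (S₁.State → S₂.State → ℝ≥0∞) where
  toFun f := fun s₁ s₂ =>
    max
      (⨆ k₁, ⨆ t₁, ⨆ _ : S₁.may s₁ k₁ t₁,
        ⨅ k₂, ⨅ t₂, ⨅ _ : S₂.may s₂ k₂ t₂, dK k₁ k₂ + lam * f t₁ t₂)
      (⨆ k₂, ⨆ t₂, ⨆ _ : S₂.must s₂ k₂ t₂,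
        ⨅ k₁, ⨅ t₁, ⨅ _ : S₁.must s₁ k₁ t₁, dK k₁ k₂ + lam * f t₁ t₂)
  monotone' := by
    intro f g hfg s₁ s₂
    dsimp only
    gcongr with k₁ t₁ h k₂ t₂ h' k₂ t₂ h k₁ t₁ h' <;> exact hfg _ _

/-- The modal refinement distance between states. -/
noncomputable def dm (lam : ℝ≥0∞) (S₁ S₂ : WMTS Act) :
    S₁.State → S₂.State → ℝ≥0∞ :=
  OrderHom.lfp (dmF lam S₁ S₂)

/-- The modal refinement distance between systems. -/
noncomputable def dmInit (lam : ℝ≥0∞) (S₁ S₂ : WMTS Act) : ℝ≥0∞ :=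
  dm lam S₁ S₂ S₁.init S₂.init

/-- The endofunction whose least fixed point is the implementation distance. -/
noncomputable def diF (lam : ℝ≥0∞) (I₁ I₂ : WMTS Act) :
    (I₁.State → I₂.State → ℝ≥0∞) →o (I₁.State → I₂.State → ℝ≥0∞) where
  toFun f := fun i₁ i₂ =>
    max
      (⨆ k₁, ⨆ j₁, ⨆ _ : I₁.must i₁ k₁ j₁,
        ⨅ k₂, ⨅ j₂, ⨅ _ : I₂.must i₂ k₂ j₂, dK k₁ k₂ + lam * f j₁ j₂)
      (⨆ k₂, ⨆ j₂, ⨆ _ : I₂.must i₂ k₂ j₂,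
        ⨅ k₁, ⨅ j₁, ⨅ _ : I₁.must i₁ k₁ j₁, dK k₁ k₂ + lam * f j₁ j₂)
  monotone' := by
    intro f g hfg i₁ i₂
    dsimp only
    gcongr with k₁ t₁ h k₂ t₂ h' k₂ t₂ h k₁ t₁ h' <;> exact hfg _ _

/-- The implementation distance between states of implementations. -/
noncomputable def di (lam : ℝ≥0∞) (I₁ I₂ : WMTS Act) :
    I₁.State → I₂.State → ℝ≥0∞ :=
  OrderHom.lfp (diF lam I₁ I₂)

/-- The implementation distance between implementations. -/
noncomputable def diInit (lam : ℝ≥0∞) (I₁ I₂ : WMTS Act) : ℝ≥0∞ :=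
  di lam I₁ I₂ I₁.init I₂.init

/-- The thorough refinement distance. -/
noncomputable def dt (lam : ℝ≥0∞) (S₁ S₂ : WMTS Act) : ℝ≥0∞ :=
  ⨆ I₁ ∈ Impl S₁, ⨅ I₂ ∈ Impl S₂, diInit lam I₁ I₂


/-- Pointwise sum of intervals. -/
noncomputable def EInterval.add (I J : EInterval) : EInterval where
  lo := I.lo + J.lo
  hi := I.hi + J.hi
  lo_mem := by
    rcases I.lo_mem with h | ⟨n, h⟩
    · exact Or.inl (by rw [h, EReal.bot_add])
    · rcases J.lo_mem with h' | ⟨m, h'⟩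
      · exact Or.inl (by rw [h', EReal.add_bot])
      · exact Or.inr ⟨n + m, by rw [h, h', ← EReal.coe_add]; norm_cast⟩
  hi_mem := by
    rcases I.hi_mem with h | ⟨n, h⟩
    · exact Or.inl (by rw [h, EReal.top_add_of_ne_bot]
                       rcases J.hi_mem with h' | ⟨m, h'⟩ <;> simp [h'])
    · rcases J.hi_mem with h' | ⟨m, h'⟩
      · exact Or.inl (by rw [h', EReal.add_top_of_ne_bot]; simp [h])
      · exact Or.inr ⟨n + m, by rw [h, h', ← EReal.coe_add]; norm_cast⟩
  lo_le_hi := add_le_add I.lo_le_hi J.lo_le_hi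

/-- Widening `I ± δ` of an interval. -/
noncomputable def EInterval.widen (I : EInterval) (δ : ℕ) : EInterval where
  lo := I.lo - ((δ : ℝ) : EReal)
  hi := I.hi + ((δ : ℝ) : EReal)
  lo_mem := by
    rcases I.lo_mem with h | ⟨n, h⟩
    · exact Or.inl (by rw [h, EReal.bot_sub])
    · exact Or.inr ⟨n - δ, by rw [h, ← EReal.coe_sub]; norm_cast⟩
  hi_mem := by
    rcases I.hi_mem with h | ⟨n, h⟩
    · exact Or.inl (by rw [h, EReal.top_add_of_ne_bot]; exact EReal.coe_ne_bot _)
    · exact Or.inr ⟨n + δ, by rw [h, ← EReal.coe_add]; norm_cast⟩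
  lo_le_hi := by
    refine le_trans ?_ (le_trans I.lo_le_hi ?_)
    · rw [sub_eq_add_neg]
      nth_rewrite 2 [show I.lo = I.lo + 0 by rw [add_zero]]
      refine add_le_add le_rfl ?_
      rw [← EReal.coe_neg, ← EReal.coe_zero, EReal.coe_le_coe_iff]
      simp
    · nth_rewrite 1 [show I.hi = I.hi + 0 by rw [add_zero]]
      refine add_le_add le_rfl ?_
      rw [← EReal.coe_zero, EReal.coe_le_coe_iff]
      simp



/-- Symmetrization of a hemimetric. -/
noncomputable def symDist {α : Type*} (d : α → α → ℝ≥0∞) : α → α → ℝ≥0∞ :=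
  fun x y => max (d x y) (d y x)

/-- Product distance. -/
noncomputable def prodDist {α β : Type*} (d : α → α → ℝ≥0∞) (e : β → β → ℝ≥0∞) :
    α × β → α × β → ℝ≥0∞ :=
  fun p q => d p.1 q.1 + e p.2 q.2

/-- (Sequential) compactness of a set with respect to an `ℝ≥0∞`-valued distance. -/
def CompactIn {α : Type*} (d : α → α → ℝ≥0∞) (A : Set α) : Prop :=
  ∀ u : ℕ → α, (∀ n, u n ∈ A) →
    ∃ x ∈ A, ∃ φ : ℕ → ℕ, StrictMono φ ∧
      Filter.Tendsto (fun n => d x (u (φ n))) Filter.atTop (nhds 0)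

/-- Compactly branching WMTS. -/
def CompactlyBranching (lam : ℝ≥0∞) (S : WMTS Act) : Prop :=
  ∀ s : S.State,
    CompactIn (prodDist (symDist (dm lam S S)) (symDist dK))
      {p : S.State × SLabel Act | S.may s p.2 p.1} ∧
    CompactIn (prodDist (symDist (dm lam S S)) (symDist dK))
      {p : S.State × SLabel Act | S.must s p.2 p.1}

/-- Deterministic WMTS. -/
def Deterministic (S : WMTS Act) : Prop :=
  ∀ (s : S.State) (a : Act) (I₁ I₂ : EInterval) (t₁ t₂ : S.State),
    S.may s (a, I₁) t₁ → S.may s (a, I₂) t₂ → I₁ = I₂ ∧ t₁ = t₂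

/-- `S'` is an ε-relaxation of `S`. -/
def Relaxation (lam ε : ℝ≥0∞) (S S' : WMTS Act) : Prop :=
  Refines S S' ∧ dmInit lam S' S ≤ ε

/-- The ε-extended implementation semantics ⟦S⟧⁺ᵉ. -/
def ImplExt (lam ε : ℝ≥0∞) (S : WMTS Act) : Set (WMTS Act) :=
  {I | I.IsImplementation ∧ dmInit lam I S ≤ ε}

/-- The δ-widening S⁺δ of a WMTS. -/
noncomputable def WMTS.widen (S : WMTS Act) (δ : ℕ) : WMTS Act where
  State := S.State
  init := S.init
  may s k t := ∃ a I, S.may s (a, I) t ∧ k = (a, I.widen δ)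
  must s k t := ∃ a I, S.must s (a, I) t ∧ k = (a, I.widen δ)
  must_may := by
    rintro s k t ⟨a, I, h, rfl⟩
    obtain ⟨ℓ, hle, hmay⟩ := S.must_may _ _ _ h
    refine ⟨(ℓ.1, ℓ.2.widen δ), ⟨hle.1, ?_, ?_⟩, ℓ.1, ℓ.2, hmay, rfl⟩
    · exact EReal.sub_le_sub hle.2.1 le_rfl
    · exact add_le_add hle.2.2 le_rfl

/-- Definedness of label synchronization ⊕. -/
def OplusDefined (k ℓ : SLabel Act) : Prop := k.1 = ℓ.1

/-- Label synchronization ⊕ (adding the intervals). -/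
noncomputable def oplus (k ℓ : SLabel Act) : SLabel Act :=
  (k.1, k.2.add ℓ.2)

/-- Definedness of label quotient ⊖ (equal actions, the difference interval is a
valid extended-integer interval). -/
def OminusDefined (k ℓ : SLabel Act) : Prop :=
  k.1 = ℓ.1 ∧ k.2.lo - ℓ.2.lo ≤ k.2.hi - ℓ.2.hi ∧
    (k.2.lo - ℓ.2.lo = ⊥ ∨ ∃ n : ℤ, k.2.lo - ℓ.2.lo = ((n : ℝ) : EReal)) ∧
    (k.2.hi - ℓ.2.hi = ⊤ ∨ ∃ n : ℤ, k.2.hi - ℓ.2.hi = ((n : ℝ) : EReal))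

/-- Label quotient ⊖. -/
noncomputable def ominus (k ℓ : SLabel Act) (h : OminusDefined k ℓ) : SLabel Act :=
  (k.1, ⟨k.2.lo - ℓ.2.lo, k.2.hi - ℓ.2.hi, h.2.2.1, h.2.2.2, h.2.1⟩)

/-- Structural composition S₁ ∥ S₂ (CSP-style synchronization, adding weights). -/
noncomputable def par (S₁ S₂ : WMTS Act) : WMTS Act where
  State := S₁.State × S₂.State
  init := (S₁.init, S₂.init)
  may p k q := ∃ k₁ k₂, S₁.may p.1 k₁ q.1 ∧ S₂.may p.2 k₂ q.2 ∧
    OplusDefined k₁ k₂ ∧ k = oplus k₁ k₂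
  must p k q := ∃ k₁ k₂, S₁.must p.1 k₁ q.1 ∧ S₂.must p.2 k₂ q.2 ∧
    OplusDefined k₁ k₂ ∧ k = oplus k₁ k₂
  must_may := by
    rintro p k q ⟨k₁, k₂, h₁, h₂, hd, rfl⟩
    obtain ⟨ℓ₁, hle₁, hmay₁⟩ := S₁.must_may _ _ _ h₁
    obtain ⟨ℓ₂, hle₂, hmay₂⟩ := S₂.must_may _ _ _ h₂
    refine ⟨oplus ℓ₁ ℓ₂, ⟨?_, ?_, ?_⟩,
      ℓ₁, ℓ₂, hmay₁, hmay₂, by rw [OplusDefined, ← hle₁.1, ← hle₂.1]; exact hd, rfl⟩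
    · exact hle₁.1
    · exact add_le_add hle₁.2.1 hle₂.2.1
    · exact add_le_add hle₁.2.2 hle₂.2.2

section Quotient

variable (S₁ S₂ : WMTS Act)

/-- May transitions of the (unpruned) quotient; `none` is the universal state u. -/
def qmay : Option (S₁.State × S₂.State) → SLabel Act → Option (S₁.State × S₂.State) → Prop
  | some p, k, some q =>
      (∃ k₁ k₂, ∃ h : OminusDefined k₁ k₂,
        S₁.may p.1 k₁ q.1 ∧ S₂.may p.2 k₂ q.2 ∧ k = ominus k₁ k₂ h) ∨
      (∃ k₁ k₂, ∃ h : OminusDefined k₁ k₂,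
        S₁.must p.1 k₁ q.1 ∧ S₂.must p.2 k₂ q.2 ∧ k = ominus k₁ k₂ h)
  | some p, k, none => ∀ k₂ t₂, S₂.may p.2 k₂ t₂ → ¬ OplusDefined k k₂
  | none, _, none => True
  | none, _, some _ => False

/-- Must transitions of the (unpruned) quotient. -/
def qmust : Option (S₁.State × S₂.State) → SLabel Act → Option (S₁.State × S₂.State) → Prop
  | some p, k, some q =>
      ∃ k₁ k₂, ∃ h : OminusDefined k₁ k₂,
        S₁.must p.1 k₁ q.1 ∧ S₂.must p.2 k₂ q.2 ∧ k = ominus k₁ k₂ h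
  | _, _, _ => False

/-- Inconsistent states of the quotient. -/
def QBad : Option (S₁.State × S₂.State) → Prop
  | some p => ∃ k₁ t₁, S₁.must p.1 k₁ t₁ ∧
      ∀ k₂ t₂, S₂.must p.2 k₂ t₂ → ¬ OminusDefined k₁ k₂
  | none => False

/-- States removed by pruning: those that can reach an inconsistent state via
must transitions (reflexive-transitive closure of `pre`). -/
def QPruned (p : Option (S₁.State × S₂.State)) : Prop :=
  ∃ q, Relation.ReflTransGen (fun x y => ∃ k, qmust S₁ S₂ x k y) p q ∧ QBad S₁ S₂ q

/-- The quotient S₁ ⫽ S₂, defined whenever the initial state survives pruning. -/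
noncomputable def quotient' (h : ¬ QPruned S₁ S₂ (some (S₁.init, S₂.init))) :
    WMTS Act where
  State := {p : Option (S₁.State × S₂.State) // ¬ QPruned S₁ S₂ p}
  init := ⟨some (S₁.init, S₂.init), h⟩
  may p k q := qmay S₁ S₂ p.1 k q.1
  must p k q := qmust S₁ S₂ p.1 k q.1
  must_may := by
    rintro ⟨p, hp⟩ k ⟨q, hq⟩ hmust
    refine ⟨k, ⟨rfl, le_rfl, le_rfl⟩, ?_⟩
    cases p with
    | none => exact hmust.elim
    | some p =>
      cases q with
      | none => exact hmust.elim
      | some q => exact Or.inr hmust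

end Quotient

/-- Formulae of the logic L. -/
inductive Formula (Act : Type) where
  | tt : Formula Act
  | ff : Formula Act
  | diam : SLabel Act → Formula Act → Formula Act
  | box : SLabel Act → Formula Act → Formula Act
  | and : Formula Act → Formula Act → Formula Act
  | or : Formula Act → Formula Act → Formula Act

/-- Disjunction-free formulae. -/
def Formula.DisjFree : Formula Act → Prop
  | .tt => True
  | .ff => True
  | .diam _ φ => φ.DisjFree
  | .box _ φ => φ.DisjFree
  | .and φ ψ => φ.DisjFree ∧ ψ.DisjFree
  | .or _ _ => False

/-- Quantitative semantics ⟦φ⟧ : S → [0,∞] of the logic L. -/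
noncomputable def sem (lam : ℝ≥0∞) (S : WMTS Act) : Formula Act → S.State → ℝ≥0∞
  | .tt, _ => 0
  | .ff, _ => ⊤
  | .and φ ψ, s => max (sem lam S φ s) (sem lam S ψ s)
  | .or φ ψ, s => min (sem lam S φ s) (sem lam S ψ s)
  | .diam ℓ φ, s =>
      ⨅ k, ⨅ t, ⨅ _ : S.must s k t ∧ dK k ℓ ≠ ⊤, dK k ℓ + lam * sem lam S φ t
  | .box ℓ φ, s =>
      ⨆ k, ⨆ t, ⨆ _ : S.may s k t ∧ dK k ℓ ≠ ⊤, dK k ℓ + lam * sem lam S φ t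

/-- ⟦φ⟧S = ⟦φ⟧s⁰. -/
noncomputable def semInit (lam : ℝ≥0∞) (S : WMTS Act) (φ : Formula Act) : ℝ≥0∞ :=
  sem lam S φ S.init


/-! ### Auxiliary material for the proof of `no_determinization_operator` -/

section NoDet

lemma erealToNNE_coe' (r : ℝ) : erealToNNE ((r : ℝ) : EReal) = ENNReal.ofReal r := by
  simp [erealToNNE]

lemma erealToNNE_mono' : Monotone erealToNNE := by
  intro x y hxy
  unfold erealToNNE
  split_ifs with hx hy hy
  · exact le_rfl
  · exact absurd (top_le_iff.mp (hx ▸ hxy)) hy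
  · exact le_top
  · rcases eq_or_ne x ⊥ with rfl | hxb
    · simp
    · exact ENNReal.ofReal_le_ofReal (EReal.toReal_le_toReal hxy hxb hy)

/-- Singleton integer interval. -/
def mkI (n : ℤ) : EInterval :=
  ⟨((n : ℝ) : EReal), ((n : ℝ) : EReal), Or.inr ⟨n, rfl⟩, Or.inr ⟨n, rfl⟩, le_rfl⟩

lemma dK_mkI {Act : Type} (a : Act) (m n : ℤ) :
    dK (a, mkI m) (a, mkI n)
      = ENNReal.ofReal (max ((n : ℝ) - m) (max ((m : ℝ) - n) 0)) := by
  unfold dK mkI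
  rw [if_pos rfl]
  dsimp only
  rw [← EReal.coe_sub, ← EReal.coe_sub, ← EReal.coe_zero,
    ← EReal.coe_strictMono.monotone.map_max, ← EReal.coe_strictMono.monotone.map_max,
    erealToNNE_coe']

variable {Act : Type}

/-- Unfolding of the modal refinement distance as a fixed point. -/
lemma dm_unfold (lam : ℝ≥0∞) (S₁ S₂ : WMTS Act) (s₁ : S₁.State) (s₂ : S₂.State) :
    dm lam S₁ S₂ s₁ s₂ =
      max
        (⨆ k₁, ⨆ t₁, ⨆ _ : S₁.may s₁ k₁ t₁,
          ⨅ k₂, ⨅ t₂, ⨅ _ : S₂.may s₂ k₂ t₂, dK k₁ k₂ + lam * dm lam S₁ S₂ t₁ t₂)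
        (⨆ k₂, ⨆ t₂, ⨆ _ : S₂.must s₂ k₂ t₂,
          ⨅ k₁, ⨅ t₁, ⨅ _ : S₁.must s₁ k₁ t₁, dK k₁ k₂ + lam * dm lam S₁ S₂ t₁ t₂) := by
  conv_lhs => rw [dm, ← OrderHom.map_lfp (dmF lam S₁ S₂)]
  rfl

/-- Lower bound on `dm` via a may-transition of the left system. -/
lemma dm_ge_of_may (lam : ℝ≥0∞) (S₁ S₂ : WMTS Act) {s₁ t₁ : S₁.State} {s₂ : S₂.State}
    {k₁ : SLabel Act} (h : S₁.may s₁ k₁ t₁) {c : ℝ≥0∞}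
    (hb : ∀ k₂ t₂, S₂.may s₂ k₂ t₂ → c ≤ dK k₁ k₂ + lam * dm lam S₁ S₂ t₁ t₂) :
    c ≤ dm lam S₁ S₂ s₁ s₂ := by
  rw [dm_unfold]
  refine le_trans ?_ (le_max_left _ _)
  refine le_trans (le_iInf fun k₂ => le_iInf fun t₂ => le_iInf fun h₂ => hb k₂ t₂ h₂) ?_
  exact le_iSup_of_le k₁ (le_iSup_of_le t₁ (le_iSup_of_le h le_rfl))

/-- States of the counterexample system `S`. -/
inductive StS | s0 | s1 | s2 | e

/-- States of the deterministic test system `T`. -/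
inductive StT | t0 | t1 | t2

/-- May relation of `S`. -/
def SSmay (a : Act) : StS → SLabel Act → StS → Prop
  | .s0, k, .s1 => k = (a, mkI 1)
  | .s0, k, .s2 => k = (a, mkI 2)
  | .s1, k, .e => k = (a, mkI 1)
  | .s2, k, .e => k = (a, mkI 2)
  | _, _, _ => False

/-- The counterexample system `S`. -/
noncomputable def SS (a : Act) : WMTS Act where
  State := StS
  init := .s0
  may := SSmay a
  must _ _ _ := False
  must_may _ _ _ h := h.elim

/-- May relation of `T`. -/
def TTmay (a : Act) : StT → SLabel Act → StT → Prop
  | .t0, k, .t1 => k = (a, mkI 1)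
  | .t1, k, .t2 => k = (a, mkI 2)
  | _, _, _ => False

/-- The deterministic test system `T`. -/
noncomputable def TT (a : Act) : WMTS Act where
  State := StT
  init := .t0
  may := TTmay a
  must _ _ _ := False
  must_may _ _ _ h := h.elim

lemma TT_det (a : Act) : Deterministic (TT a) := by
  rintro s b I₁ I₂ t₁ t₂ h₁ h₂
  have h₁' : TTmay a s (b, I₁) t₁ := h₁
  have h₂' : TTmay a s (b, I₂) t₂ := h₂
  clear h₁ h₂
  cases s <;> cases t₁ <;> cases t₂ <;> simp_all [TTmay, Prod.ext_iff] <;> rfl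

/-- A prefixed point witnessing `dm lam (SS a) (TT a) ≤ 1`. -/
noncomputable def fUB : StS → StT → ℝ≥0∞
  | .s0, .t0 => 1
  | .s1, .t1 => 1
  | .s2, .t1 => 0
  | .e, .t2 => 0
  | _, _ => ⊤

lemma dK_11 (a : Act) : dK (a, mkI 1) (a, mkI 1) = 0 := by
  rw [dK_mkI]; norm_num

lemma dK_22 (a : Act) : dK (a, mkI 2) (a, mkI 2) = 0 := by
  rw [dK_mkI]; norm_num

lemma dK_21 (a : Act) : dK (a, mkI 2) (a, mkI 1) = 1 := by
  rw [dK_mkI]; norm_num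

lemma dK_12 (a : Act) : dK (a, mkI 1) (a, mkI 2) = 1 := by
  rw [dK_mkI]; norm_num

lemma dm_SS_TT_le_one (lam : ℝ≥0∞) (hlam1 : lam ≤ 1) (a : Act) :
    dmInit lam (SS a) (TT a) ≤ 1 := by
  have hpre : dmF lam (SS a) (TT a) fUB ≤ fUB := by
    intro s t
    show max _ _ ≤ _
    apply max_le
    · -- may part
      refine iSup_le fun k₁ => iSup_le fun t₁ => iSup_le fun h => ?_
      have h' : SSmay a s k₁ t₁ := h
      cases s with
      | e => exact h'.elim
      | s0 =>
        cases t₁ with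
        | s0 => exact h'.elim
        | s2 =>
          subst h'
          cases t with
          | t1 => exact le_top
          | t2 => exact le_top
          | t0 =>
            refine le_trans (iInf_le_of_le (a, mkI 1) (iInf_le_of_le StT.t1
              (iInf_le_of_le rfl le_rfl))) ?_
            rw [dK_21]
            show 1 + lam * (0 : ℝ≥0∞) ≤ (1 : ℝ≥0∞)
            rw [mul_zero, add_zero]
        | e => exact h'.elim
        | s1 =>
          subst h'
          cases t with
          | t1 => exact le_top
          | t2 => exact le_top
          | t0 =>
            refine le_trans (iInf_le_of_le (a, mkI 1) (iInf_le_of_le StT.t1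
              (iInf_le_of_le rfl le_rfl))) ?_
            rw [dK_11, zero_add]
            show lam * (1 : ℝ≥0∞) ≤ (1 : ℝ≥0∞)
            rw [mul_one]; exact hlam1
      | s1 =>
        cases t₁ with
        | s0 => exact h'.elim
        | s1 => exact h'.elim
        | s2 => exact h'.elim
        | e =>
          subst h'
          cases t with
          | t0 => exact le_top
          | t2 => exact le_top
          | t1 =>
            refine le_trans (iInf_le_of_le (a, mkI 2) (iInf_le_of_le StT.t2
              (iInf_le_of_le rfl le_rfl))) ?_
            rw [dK_12]
            show 1 + lam * (0 : ℝ≥0∞) ≤ (1 : ℝ≥0∞)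
            rw [mul_zero, add_zero]
      | s2 =>
        cases t₁ with
        | s0 => exact h'.elim
        | s1 => exact h'.elim
        | s2 => exact h'.elim
        | e =>
          subst h'
          cases t with
          | t0 => exact le_top
          | t2 => exact le_top
          | t1 =>
            refine le_trans (iInf_le_of_le (a, mkI 2) (iInf_le_of_le StT.t2
              (iInf_le_of_le rfl le_rfl))) ?_
            rw [dK_22]
            show 0 + lam * (0 : ℝ≥0∞) ≤ (0 : ℝ≥0∞)
            rw [mul_zero, add_zero]
    · -- must part: no must transitions in TT
      refine iSup_le fun k₂ => iSup_le fun t₂ => iSup_le fun h => h.elim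
  have := OrderHom.lfp_le (dmF lam (SS a) (TT a)) hpre
  exact le_trans (this (SS a).init (TT a).init) le_rfl

lemma one_le_erealToNNE {x : EReal} (h : ((1 : ℝ) : EReal) ≤ x) : 1 ≤ erealToNNE x := by
  have := erealToNNE_mono' h
  rwa [erealToNNE_coe', ENNReal.ofReal_one] at this

lemma dK_I1_ge (a : Act) {I : EInterval} (h : ((2 : ℝ) : EReal) ≤ I.hi) :
    1 ≤ dK (a, I) (a, mkI 1) := by
  unfold dK
  rw [if_pos rfl]
  apply one_le_erealToNNE
  refine le_trans ?_ ((le_max_left _ _).trans (le_max_right _ _))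
  show ((1 : ℝ) : EReal) ≤ I.hi - (mkI 1).hi
  have h1 : ((2 : ℝ) : EReal) - (mkI 1).hi ≤ I.hi - (mkI 1).hi := EReal.sub_le_sub h le_rfl
  refine le_trans ?_ h1
  show ((1 : ℝ) : EReal) ≤ ((2 : ℝ) : EReal) - ((((1 : ℤ) : ℝ)) : EReal)
  rw [← EReal.coe_sub, EReal.coe_le_coe_iff]
  norm_num

lemma dK_J2_ge (a : Act) {J : EInterval} (h : J.lo ≤ ((1 : ℝ) : EReal)) :
    1 ≤ dK (a, J) (a, mkI 2) := by
  unfold dK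
  rw [if_pos rfl]
  apply one_le_erealToNNE
  refine le_trans ?_ (le_max_left _ _)
  show ((1 : ℝ) : EReal) ≤ (mkI 2).lo - J.lo
  have h1 : (mkI 2).lo - ((1 : ℝ) : EReal) ≤ (mkI 2).lo - J.lo := EReal.sub_le_sub le_rfl h
  refine le_trans ?_ h1
  show ((1 : ℝ) : EReal) ≤ (((((2 : ℤ) : ℝ)) : EReal)) - ((1 : ℝ) : EReal)
  rw [← EReal.coe_sub, EReal.coe_le_coe_iff]
  norm_num

end NoDet


/-- there is no determinization operator which is an upper
bound for modal refinement and least (up to distances) among deterministic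
overapproximations. -/
theorem no_determinization_operator {Act : Type} [Nonempty Act]
    (lam : ℝ≥0∞) (hlam0 : 0 < lam) (hlam1 : lam < 1) :
    ¬ ∃ D : WMTS Act → WMTS Act,
        (∀ S, Deterministic (D S)) ∧
        (∀ S, Refines S (D S)) ∧
        (∀ (S T : WMTS Act) (ε : ℝ≥0∞), Deterministic T →
          dmInit lam S T ≤ ε → dmInit lam (D S) T ≤ ε) := by
  rintro ⟨D, hdet, href, hdist⟩
  obtain ⟨a⟩ := (inferInstance : Nonempty Act)
  have hST := dm_SS_TT_le_one lam hlam1.le a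
  have hDS : dmInit lam (D (SS a)) (TT a) ≤ 1 := hdist (SS a) (TT a) 1 (TT_det a) hST
  obtain ⟨R, hR0, hRstep⟩ := href (SS a)
  obtain ⟨k₁, u₁, hu₁, hle₁, hR1⟩ := (hRstep _ _ hR0).1 (a, mkI 1) .s1 rfl
  obtain ⟨k₂, u₂, hu₂, hle₂, hR2⟩ := (hRstep _ _ hR0).1 (a, mkI 2) .s2 rfl
  obtain ⟨a₁, I₁⟩ := k₁
  obtain ⟨a₂, I₂⟩ := k₂
  obtain rfl : a = a₁ := hle₁.1
  obtain rfl : a = a₂ := hle₂.1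
  obtain ⟨rfl, rfl⟩ := hdet (SS a) (D (SS a)).init a I₂ I₁ u₂ u₁ hu₂ hu₁
  -- second level
  obtain ⟨kb₁, v₁, hv₁, hleb₁, -⟩ := (hRstep _ _ hR1).1 (a, mkI 1) .e rfl
  obtain ⟨kb₂, v₂, hv₂, hleb₂, -⟩ := (hRstep _ _ hR2).1 (a, mkI 2) .e rfl
  obtain ⟨b₁, J₁⟩ := kb₁
  obtain ⟨b₂, J₂⟩ := kb₂
  obtain rfl : a = b₁ := hleb₁.1
  obtain rfl : a = b₂ := hleb₂.1
  obtain ⟨rfl, rfl⟩ := hdet (SS a) u₂ a J₂ J₁ v₂ v₁ hv₂ hv₁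
  have hIhi : ((2 : ℝ) : EReal) ≤ I₂.hi := by
    have h2 : ((((2 : ℤ) : ℝ)) : EReal) = ((2 : ℝ) : EReal) := by norm_num
    exact h2 ▸ hle₂.2.2
  have hJlo : J₂.lo ≤ ((1 : ℝ) : EReal) := by
    have h1 : ((((1 : ℤ) : ℝ)) : EReal) = ((1 : ℝ) : EReal) := by norm_num
    exact h1 ▸ hleb₁.2.1
  have hlow1 : (1 : ℝ≥0∞) ≤ dm lam (D (SS a)) (TT a) u₂ .t1 := by
    refine dm_ge_of_may lam _ _ hv₁ ?_
    intro k₂' t₂ hmay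
    have hm : TTmay a .t1 k₂' t₂ := hmay
    cases t₂ with
    | t0 => exact hm.elim
    | t1 => exact hm.elim
    | t2 =>
      subst hm
      exact le_trans (dK_J2_ge a hJlo) le_self_add
  have hlow : 1 + lam ≤ dm lam (D (SS a)) (TT a) (D (SS a)).init .t0 := by
    refine dm_ge_of_may lam _ _ hu₁ ?_
    intro k₂' t₂ hmay
    have hm : TTmay a .t0 k₂' t₂ := hmay
    cases t₂ with
    | t0 => exact hm.elim
    | t2 => exact hm.elim
    | t1 =>
      subst hm
      refine add_le_add (dK_I1_ge a hIhi) ?_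
      calc lam = lam * 1 := (mul_one lam).symm
        _ ≤ lam * dm lam (D (SS a)) (TT a) u₂ .t1 := mul_le_mul_right hlow1 lam
  have hcontr : (1 : ℝ≥0∞) + lam ≤ 1 := le_trans hlow hDS
  have hl0 : lam ≤ 0 := by
    have h10 : (1 : ℝ≥0∞) + lam ≤ 1 + 0 := by rwa [add_zero]
    exact (ENNReal.add_le_add_iff_left (by norm_num : (1 : ℝ≥0∞) ≠ ⊤)).mp h10
  exact hlam0.ne' (le_zero_iff.mp hl0)

end WMTSQuant
end

section
/- Independent implementability: for all WMTS S₁, S₂, S₃, S₄, d_m(S₁∥S₃, S₂∥S₄) ≤ d_m(S₁,S₂) + d_m(S₃,S₄). -/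
open scoped ENNReal

namespace WMTSQuant

variable {Act : Type}

lemma erealToNNE_mono {x y : EReal} (h : x ≤ y) : erealToNNE x ≤ erealToNNE y := by
  unfold erealToNNE
  split_ifs with hx hy hy
  · rfl
  · exact absurd (top_le_iff.mp (hx ▸ h)) hy
  · exact le_top
  · rcases eq_or_ne x ⊥ with rfl | hxb
    · simp
    · exact ENNReal.ofReal_le_ofReal (EReal.toReal_le_toReal h hxb hy)

lemma erealToNNE_add_le {x y : EReal} (hx : 0 ≤ x) (hy : 0 ≤ y) :
    erealToNNE (x + y) ≤ erealToNNE x + erealToNNE y := by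
  unfold erealToNNE
  rcases eq_or_ne x ⊤ with rfl | hxt
  · simp
  rcases eq_or_ne y ⊤ with rfl | hyt
  · simp
  have hxb : x ≠ ⊥ := fun h => by simp [h] at hx
  have hyb : y ≠ ⊥ := fun h => by simp [h] at hy
  have hxyt : x + y ≠ ⊤ := by
    lift x to ℝ using ⟨hxt, hxb⟩
    lift y to ℝ using ⟨hyt, hyb⟩
    rw [← EReal.coe_add]; exact EReal.coe_ne_top _
  rw [if_neg hxyt, if_neg hxt, if_neg hyt, EReal.toReal_add hxt hxb hyt hyb,
    ENNReal.ofReal_add (by simpa using EReal.toReal_le_toReal hx (by simp) hxt)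
      (by simpa using EReal.toReal_le_toReal hy (by simp) hyt)]

lemma ereal_sub_add_sub (a b c d : EReal)
    (h1 : c ≠ ⊥ ∨ d ≠ ⊤) (h2 : c ≠ ⊤ ∨ d ≠ ⊥) :
    (a + b) - (c + d) = (a - c) + (b - d) := by
  rw [sub_eq_add_neg, EReal.neg_add h1 h2, sub_eq_add_neg, sub_eq_add_neg,
    sub_eq_add_neg, add_add_add_comm]

lemma EInterval.lo_ne_top (I : EInterval) : I.lo ≠ ⊤ := by
  rcases I.lo_mem with h | ⟨n, h⟩ <;> simp [h]

lemma EInterval.hi_ne_bot (I : EInterval) : I.hi ≠ ⊥ := by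
  rcases I.hi_mem with h | ⟨n, h⟩ <;> simp [h]

lemma dK_oplus_le (k₁ k₂ k₃ k₄ : SLabel Act) :
    dK (oplus k₁ k₃) (oplus k₂ k₄) ≤ dK k₁ k₂ + dK k₃ k₄ := by
  by_cases h12 : k₁.1 = k₂.1
  · by_cases h34 : k₃.1 = k₄.1
    · have hop : (oplus k₁ k₃).1 = (oplus k₂ k₄).1 := h12
      rw [dK, if_pos hop, dK, if_pos h12, dK, if_pos h34]
      set L₁ := k₂.2.lo - k₁.2.lo
      set L₂ := k₄.2.lo - k₃.2.lo
      set H₁ := k₁.2.hi - k₂.2.hi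
      set H₂ := k₃.2.hi - k₄.2.hi
      have hX0 : (0 : EReal) ≤ max L₁ (max H₁ 0) :=
        le_trans (le_max_right _ _) (le_max_right _ _)
      have hY0 : (0 : EReal) ≤ max L₂ (max H₂ 0) :=
        le_trans (le_max_right _ _) (le_max_right _ _)
      have hlo : (oplus k₂ k₄).2.lo - (oplus k₁ k₃).2.lo = L₁ + L₂ :=
        ereal_sub_add_sub _ _ _ _ (Or.inr k₃.2.lo_ne_top) (Or.inl k₁.2.lo_ne_top)
      have hhi : (oplus k₁ k₃).2.hi - (oplus k₂ k₄).2.hi = H₁ + H₂ :=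
        ereal_sub_add_sub _ _ _ _ (Or.inl k₂.2.hi_ne_bot) (Or.inr k₄.2.hi_ne_bot)
      rw [hlo, hhi]
      refine le_trans (erealToNNE_mono (max_le ?_ (max_le ?_ ?_)))
        (erealToNNE_add_le hX0 hY0)
      · exact add_le_add (le_max_left _ _) (le_max_left _ _)
      · exact add_le_add (le_trans (le_max_left _ _) (le_max_right _ _))
          (le_trans (le_max_left _ _) (le_max_right _ _))
      · simpa using add_le_add hX0 hY0
    · have h4 : dK k₃ k₄ = ⊤ := by rw [dK, if_neg h34]
      rw [h4, add_top]; exact le_top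
  · have h2 : dK k₁ k₂ = ⊤ := by rw [dK, if_neg h12]
    rw [h2, top_add]; exact le_top

lemma dm_may_le (lam : ℝ≥0∞) (S T : WMTS Act) {s : S.State} {t : T.State}
    {k : SLabel Act} {s' : S.State} (h : S.may s k s') :
    (⨅ k₂, ⨅ t₂, ⨅ _ : T.may t k₂ t₂, dK k k₂ + lam * dm lam S T s' t₂)
      ≤ dm lam S T s t := by
  have hfix : max
      (⨆ k₁, ⨆ t₁, ⨆ _ : S.may s k₁ t₁,
        ⨅ k₂, ⨅ t₂, ⨅ _ : T.may t k₂ t₂, dK k₁ k₂ + lam * dm lam S T t₁ t₂)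
      (⨆ k₂, ⨆ t₂, ⨆ _ : T.must t k₂ t₂,
        ⨅ k₁, ⨅ t₁, ⨅ _ : S.must s k₁ t₁, dK k₁ k₂ + lam * dm lam S T t₁ t₂)
      = dm lam S T s t :=
    congrFun (congrFun (OrderHom.map_lfp (dmF lam S T)) s) t
  rw [← hfix]
  refine le_trans ?_ (le_max_left _ _)
  exact le_iSup_of_le k (le_iSup_of_le s' (le_iSup_of_le h le_rfl))

lemma dm_must_le (lam : ℝ≥0∞) (S T : WMTS Act) {s : S.State} {t : T.State}
    {k : SLabel Act} {t' : T.State} (h : T.must t k t') :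
    (⨅ k₁, ⨅ t₁, ⨅ _ : S.must s k₁ t₁, dK k₁ k + lam * dm lam S T t₁ t')
      ≤ dm lam S T s t := by
  have hfix : max
      (⨆ k₁, ⨆ t₁, ⨆ _ : S.may s k₁ t₁,
        ⨅ k₂, ⨅ t₂, ⨅ _ : T.may t k₂ t₂, dK k₁ k₂ + lam * dm lam S T t₁ t₂)
      (⨆ k₂, ⨆ t₂, ⨆ _ : T.must t k₂ t₂,
        ⨅ k₁, ⨅ t₁, ⨅ _ : S.must s k₁ t₁, dK k₁ k₂ + lam * dm lam S T t₁ t₂)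
      = dm lam S T s t :=
    congrFun (congrFun (OrderHom.map_lfp (dmF lam S T)) s) t
  rw [← hfix]
  refine le_trans ?_ (le_max_right _ _)
  exact le_iSup_of_le k (le_iSup_of_le t' (le_iSup_of_le h le_rfl))

/-- independent implementability:
d_m(S₁∥S₃, S₂∥S₄) ≤ d_m(S₁,S₂) + d_m(S₃,S₄). -/
theorem independent_implementability {Act : Type} (lam : ℝ≥0∞)
    (hlam0 : 0 < lam) (hlam1 : lam < 1) (S₁ S₂ S₃ S₄ : WMTS Act) :
    dmInit lam (par S₁ S₃) (par S₂ S₄) ≤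
      dmInit lam S₁ S₂ + dmInit lam S₃ S₄ := by
  have key : dm lam (par S₁ S₃) (par S₂ S₄) ≤
      fun p q => dm lam S₁ S₂ p.1 q.1 + dm lam S₃ S₄ p.2 q.2 := by
    apply OrderHom.lfp_le
    intro p q
    apply max_le
    · refine iSup_le fun k => iSup_le fun t => iSup_le fun htr => ?_
      obtain ⟨kA, kB, hA, hB, hd, rfl⟩ := htr
      refine le_trans ?_ (add_le_add (dm_may_le lam S₁ S₂ hA) (dm_may_le lam S₃ S₄ hB))
      have hsplit : (⨅ k₂, ⨅ t₂, ⨅ _ : S₂.may q.1 k₂ t₂, dK kA k₂ + lam * dm lam S₁ S₂ t.1 t₂)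
          + (⨅ k₄, ⨅ t₄, ⨅ _ : S₄.may q.2 k₄ t₄, dK kB k₄ + lam * dm lam S₃ S₄ t.2 t₄)
        = ⨅ k₄, ⨅ t₄, ⨅ _ : S₄.may q.2 k₄ t₄, ⨅ k₂, ⨅ t₂, ⨅ _ : S₂.may q.1 k₂ t₂,
            (dK kA k₂ + lam * dm lam S₁ S₂ t.1 t₂) + (dK kB k₄ + lam * dm lam S₃ S₄ t.2 t₄) := by
        simp only [ENNReal.iInf_add, ENNReal.add_iInf]
      rw [hsplit]
      refine le_iInf fun k₄ => le_iInf fun t₄ => le_iInf fun h₄ =>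
        le_iInf fun k₂ => le_iInf fun t₂ => le_iInf fun h₂ => ?_
      by_cases hdef : OplusDefined k₂ k₄
      · refine le_trans (iInf_le_of_le (oplus k₂ k₄) (iInf_le_of_le (t₂, t₄)
          (iInf_le_of_le ⟨k₂, k₄, h₂, h₄, hdef, rfl⟩ le_rfl))) ?_
        rw [mul_add, add_add_add_comm]
        exact add_le_add (dK_oplus_le kA k₂ kB k₄) le_rfl
      · have : kA.1 ≠ k₂.1 ∨ kB.1 ≠ k₄.1 := by
          by_contra h; push_neg at h
          exact hdef (show k₂.1 = k₄.1 by rw [← h.1, ← h.2]; exact hd)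
        rcases this with h | h
        · have ht : dK kA k₂ = ⊤ := by rw [dK, if_neg h]
          rw [ht]; simp
        · have ht : dK kB k₄ = ⊤ := by rw [dK, if_neg h]
          rw [ht]; simp
    · refine iSup_le fun k => iSup_le fun t => iSup_le fun htr => ?_
      obtain ⟨kA, kB, hA, hB, hd, rfl⟩ := htr
      refine le_trans ?_ (add_le_add (dm_must_le lam S₁ S₂ hA) (dm_must_le lam S₃ S₄ hB))
      have hsplit : (⨅ k₂, ⨅ t₂, ⨅ _ : S₁.must p.1 k₂ t₂, dK k₂ kA + lam * dm lam S₁ S₂ t₂ t.1)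
          + (⨅ k₄, ⨅ t₄, ⨅ _ : S₃.must p.2 k₄ t₄, dK k₄ kB + lam * dm lam S₃ S₄ t₄ t.2)
        = ⨅ k₄, ⨅ t₄, ⨅ _ : S₃.must p.2 k₄ t₄, ⨅ k₂, ⨅ t₂, ⨅ _ : S₁.must p.1 k₂ t₂,
            (dK k₂ kA + lam * dm lam S₁ S₂ t₂ t.1) + (dK k₄ kB + lam * dm lam S₃ S₄ t₄ t.2) := by
        simp only [ENNReal.iInf_add, ENNReal.add_iInf]
      rw [hsplit]
      refine le_iInf fun k₄ => le_iInf fun t₄ => le_iInf fun h₄ =>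
        le_iInf fun k₂ => le_iInf fun t₂ => le_iInf fun h₂ => ?_
      by_cases hdef : OplusDefined k₂ k₄
      · refine le_trans (iInf_le_of_le (oplus k₂ k₄) (iInf_le_of_le (t₂, t₄)
          (iInf_le_of_le ⟨k₂, k₄, h₂, h₄, hdef, rfl⟩ le_rfl))) ?_
        rw [mul_add, add_add_add_comm]
        exact add_le_add (dK_oplus_le k₂ kA k₄ kB) le_rfl
      · have : k₂.1 ≠ kA.1 ∨ k₄.1 ≠ kB.1 := by
          by_contra h; push_neg at h
          exact hdef (show k₂.1 = k₄.1 by rw [h.1, h.2]; exact hd)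
        rcases this with h | h
        · have ht : dK k₂ kA = ⊤ := by rw [dK, if_neg h]
          rw [ht]; simp
        · have ht : dK k₄ kB = ⊤ := by rw [dK, if_neg h]
          rw [ht]; simp
  exact key (S₁.init, S₃.init) (S₂.init, S₄.init)


end WMTSQuant
end

section
/- For all specification labels k₁, k₂, k₃ ∈ 𝕂 such that k₁⊖k₂ and k₂⊕k₃ are defined, d_𝕂(k₃, k₁⊖k₂) = d_𝕂(k₂⊕k₃, k₁). -/
open scoped ENNReal

namespace WMTSQuant

variable {Act : Type}

private lemma dK_aux_lo (x₁ x₂ x₃ : EReal)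
    (h1 : x₁ = ⊥ ∨ ∃ n : ℤ, x₁ = ((n:ℝ):EReal))
    (h2 : x₂ = ⊥ ∨ ∃ n : ℤ, x₂ = ((n:ℝ):EReal))
    (h3 : x₃ = ⊥ ∨ ∃ n : ℤ, x₃ = ((n:ℝ):EReal))
    (hlo : x₁ - x₂ = ⊥ ∨ ∃ n : ℤ, x₁ - x₂ = ((n:ℝ):EReal)) :
    (x₁ - x₂) - x₃ = x₁ - (x₂ + x₃) := by
  rcases h1 with rfl | ⟨a, rfl⟩ <;> rcases h2 with rfl | ⟨b, rfl⟩ <;>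
    rcases h3 with rfl | ⟨c, rfl⟩ <;>
    simp_all [sub_eq_add_neg, ← EReal.coe_neg, ← EReal.coe_add] <;>
    norm_cast <;> ring_nf

private lemma dK_aux_hi (y₁ y₂ y₃ : EReal)
    (h1 : y₁ = ⊤ ∨ ∃ n : ℤ, y₁ = ((n:ℝ):EReal))
    (h2 : y₂ = ⊤ ∨ ∃ n : ℤ, y₂ = ((n:ℝ):EReal))
    (h3 : y₃ = ⊤ ∨ ∃ n : ℤ, y₃ = ((n:ℝ):EReal))
    (hhi : y₁ - y₂ = ⊤ ∨ ∃ n : ℤ, y₁ - y₂ = ((n:ℝ):EReal)) :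
    y₃ - (y₁ - y₂) = (y₂ + y₃) - y₁ := by
  rcases h1 with rfl | ⟨a, rfl⟩ <;> rcases h2 with rfl | ⟨b, rfl⟩ <;>
    rcases h3 with rfl | ⟨c, rfl⟩ <;>
    simp_all [sub_eq_add_neg, ← EReal.coe_neg, ← EReal.coe_add] <;>
    norm_cast <;> ring_nf

/-- d_𝕂(k₃, k₁⊖k₂) = d_𝕂(k₂⊕k₃, k₁) whenever k₁⊖k₂ and k₂⊕k₃
are defined. -/
theorem dK_ominus_eq_dK_oplus {Act : Type} (k₁ k₂ k₃ : SLabel Act)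
    (h : OminusDefined k₁ k₂) (h' : OplusDefined k₂ k₃) :
    dK k₃ (ominus k₁ k₂ h) = dK (oplus k₂ k₃) k₁ := by
  obtain ⟨hact, hle, hlo, hhi⟩ := h
  have hc₁ : k₃.1 = (ominus k₁ k₂ ⟨hact, hle, hlo, hhi⟩).1 :=
    (h'.symm.trans hact.symm : k₃.1 = k₁.1)
  have hc₂ : (oplus k₂ k₃).1 = k₁.1 := hact.symm
  rw [dK, dK, if_pos hc₁, if_pos hc₂]
  congr 1
  show ((k₁.2.lo - k₂.2.lo) - k₃.2.lo) ⊔ ((k₃.2.hi - (k₁.2.hi - k₂.2.hi)) ⊔ 0)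
      = (k₁.2.lo - (k₂.2.lo + k₃.2.lo)) ⊔ (((k₂.2.hi + k₃.2.hi) - k₁.2.hi) ⊔ 0)
  rw [dK_aux_lo _ _ _ k₁.2.lo_mem k₂.2.lo_mem k₃.2.lo_mem hlo,
    dK_aux_hi _ _ _ k₁.2.hi_mem k₂.2.hi_mem k₃.2.hi_mem hhi]

end WMTSQuant
end
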